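/- Assume 2αJΦ′(0) < 1. Then there exists λ_c > 0 (depending only on α, J and Φ) such that for every λ ∈ (0, λ_c], the origin is a globally asymptotically stable equilibrium of the dynamical system generated by Ψ: for every initial condition (p₀, d₀) with p₀ ∈ ℝ and d₀ ∈ [−1,1], the orbit (p_n, d_n) converges to (0,0) as n → ∞. -/

import Mathlib

set_option maxHeartbeats 1000000 in
/-- Theorem dyns: if 2αJΦ′(0) < 1, there exists λ_c > 0 (depending only on α,
J, Φ) such that for every λ ∈ (0, λ_c] the origin is a globally asymptotically
stable equilibrium of the dynamical system generated by Ψ: every orbit with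
d₀ ∈ [−1,1] converges to (0,0). -/
theorem global_asymptotic_stability
    (α J : ℝ) (Φ Φ' : ℝ → ℝ)
    (hα : 0 < α) (hα1 : α < 1) (hJ : 0 < J)
    (hmono : Monotone Φ)
    (hbot : Filter.Tendsto Φ Filter.atBot (nhds 0))
    (htop : Filter.Tendsto Φ Filter.atTop (nhds 1))
    (hderiv : ∀ x, HasDerivAt Φ (Φ' x) x)
    (hmax : ∀ x, Φ' x ≤ Φ' 0)
    (hincr : StrictMonoOn Φ' (Set.Iio (0 : ℝ)))
    (hdecr : StrictAntiOn Φ' (Set.Ioi (0 : ℝ)))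
    (hΦ0 : Φ 0 = 1 / 2)
    (hb : 2 * α * J * Φ' 0 < 1)
    (Ψ : ℝ → ℝ × ℝ → ℝ × ℝ)
    (hΨ : ∀ (lam : ℝ) (x : ℝ × ℝ), Ψ lam x =
      (x.1 + lam * x.2,
       α * (1 - 2 * Φ (x.1 + (lam - J) * x.2))
         + (1 - α) * (1 - 2 * Φ (x.1 + lam * x.2)))) :
    ∃ lamc > (0 : ℝ), ∀ lam : ℝ, 0 < lam → lam ≤ lamc →
      ∀ s : ℕ → ℝ × ℝ, (∀ n : ℕ, s (n + 1) = Ψ lam (s n)) →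
        (s 0).2 ∈ Set.Icc (-1 : ℝ) 1 →
        Filter.Tendsto s Filter.atTop (nhds ((0 : ℝ), (0 : ℝ))) := by
  classical
  -- derivative is nonnegative
  have hΦ'nonneg : ∀ x, 0 ≤ Φ' x := by
    intro x
    have hslope : Filter.Tendsto (slope Φ x) (nhdsWithin x {x}ᶜ) (nhds (Φ' x)) :=
      hasDerivAt_iff_tendsto_slope.mp (hderiv x)
    have hslope' : Filter.Tendsto (slope Φ x) (nhdsWithin x (Set.Ioi x)) (nhds (Φ' x)) :=
      hslope.mono_left (nhdsWithin_mono x (fun y hy => ne_of_gt hy))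
    refine ge_of_tendsto hslope' ?_
    filter_upwards [self_mem_nhdsWithin] with y hy
    have h1 : (0:ℝ) < y - x := sub_pos.mpr hy
    rw [slope_def_field]
    exact div_nonneg (sub_nonneg.mpr (hmono (le_of_lt hy))) h1.le
  -- derivative is positive
  have hΦ'pos : ∀ x, 0 < Φ' x := by
    intro x
    rcases lt_trichotomy x 0 with hx | hx | hx
    · have h1 : Φ' (x - 1) < Φ' x := hincr (by simp only [Set.mem_Iio]; linarith)
        (by simpa using hx) (by linarith)
      exact lt_of_le_of_lt (hΦ'nonneg _) h1
    · subst hx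
      have h1 : Φ' (-2 : ℝ) < Φ' (-1 : ℝ) := hincr (by norm_num) (by norm_num) (by norm_num)
      have h2 : Φ' (-1 : ℝ) ≤ Φ' 0 := hmax _
      have h3 : 0 ≤ Φ' (-2 : ℝ) := hΦ'nonneg _
      linarith
    · have h1 : Φ' (x + 1) < Φ' x := hdecr (by simpa using hx)
        (by simp only [Set.mem_Ioi]; linarith) (by linarith)
      exact lt_of_le_of_lt (hΦ'nonneg _) h1
  have hc0 : 0 < Φ' 0 := hΦ'pos 0
  have hsm : StrictMono Φ :=
    strictMono_of_deriv_pos (fun x => by rw [(hderiv x).deriv]; exact hΦ'pos x)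
  -- Lipschitz bound
  have hLip : ∀ a b : ℝ, |Φ a - Φ b| ≤ Φ' 0 * |a - b| := by
    intro a b
    have h := (convex_univ : Convex ℝ (Set.univ : Set ℝ)).norm_image_sub_le_of_norm_deriv_le
      (f := Φ) (fun x _ => (hderiv x).differentiableAt)
      (fun x _ => by
        rw [(hderiv x).deriv, Real.norm_eq_abs, abs_of_nonneg (hΦ'nonneg x)]; exact hmax x)
      (Set.mem_univ b) (Set.mem_univ a)
    simpa [Real.norm_eq_abs] using h
  -- constants
  have habs : ∀ (c X : ℝ), 0 < c → |c*X| = c*|X| := fun c X hc => by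
    rw [abs_mul, abs_of_pos hc]
  obtain ⟨κ, hκdef⟩ : ∃ k : ℝ, k = 2*α*J*Φ' 0 := ⟨_, rfl⟩
  have hκpos : 0 < κ := by rw [hκdef]; positivity
  have hκ1 : κ < 1 := by rw [hκdef]; exact hb
  have h1κ : 0 < 1 - κ := by linarith
  obtain ⟨L, hLdef⟩ : ∃ l : ℝ, l = 2*Φ' 0 := ⟨_, rfl⟩
  have hLpos : 0 < L := by rw [hLdef]; positivity
  obtain ⟨M, hMdef⟩ : ∃ m : ℝ, m = L / (1 - κ) := ⟨_, rfl⟩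
  have hMpos : 0 < M := by rw [hMdef]; exact div_pos hLpos h1κ
  obtain ⟨cc, hccdef⟩ : ∃ c : ℝ, c = (1 - κ)/(2*L) := ⟨_, rfl⟩
  have hccpos : 0 < cc := by rw [hccdef]; exact div_pos h1κ (by positivity)
  have hcM : cc * M = 1/2 := by
    rw [hccdef, hMdef]
    field_simp
  refine ⟨(1-κ)^2/(6*L*(1+κ)), by positivity, ?_⟩
  intro lam hlam hlamle s hs _hd0
  have hkey0 : lam * (6*L*(1+κ)) ≤ (1-κ)^2 := by
    rwa [le_div_iff₀ (by positivity)] at hlamle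
  have hlamL : lam * L ≤ 1 - κ := by nlinarith
  have hlamM : lam * M ≤ 1 := by
    rw [hMdef, ← mul_div_assoc, div_le_one h1κ]; exact hlamL
  have hlamκL : 6*(lam*κ)*L ≤ (1-κ)^2 := by nlinarith
  -- the second-component map
  obtain ⟨g, hgdef⟩ : ∃ g : ℝ → ℝ → ℝ, ∀ q d,
      g q d = α*(1 - 2*Φ (q - J*d)) + (1-α)*(1 - 2*Φ q) := ⟨_, fun q d => rfl⟩
  have hgd : ∀ q d e, |g q d - g q e| ≤ κ * |d - e| := by
    intro q d e
    have h1 : g q d - g q e = 2*α*(Φ (q - J*e) - Φ (q - J*d)) := by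
      rw [hgdef, hgdef]; ring
    have h2 : |Φ (q - J*e) - Φ (q - J*d)| ≤ Φ' 0 * (J * |d - e|) := by
      have h3 := hLip (q - J*e) (q - J*d)
      have h4 : |(q - J*e) - (q - J*d)| = J * |d - e| := by
        rw [show (q - J*e) - (q - J*d) = J*(d - e) by ring, abs_mul, abs_of_pos hJ]
      rwa [h4] at h3
    rw [h1, habs _ _ (by positivity : (0:ℝ) < 2*α), hκdef]
    nlinarith [mul_le_mul_of_nonneg_left h2 (by positivity : (0:ℝ) ≤ 2*α)]
  have hgq : ∀ q r d, |g q d - g r d| ≤ L * |q - r| := by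
    intro q r d
    have h1 : g q d - g r d = 2*α*(Φ (r - J*d) - Φ (q - J*d)) + 2*(1-α)*(Φ r - Φ q) := by
      rw [hgdef, hgdef]; ring
    have h2 : |Φ (r - J*d) - Φ (q - J*d)| ≤ Φ' 0 * |q - r| := by
      have h3 := hLip (r - J*d) (q - J*d)
      have h4 : |(r - J*d) - (q - J*d)| = |q - r| := by
        rw [show (r - J*d) - (q - J*d) = -(q - r) by ring, abs_neg]
      rwa [h4] at h3
    have h5 : |Φ r - Φ q| ≤ Φ' 0 * |q - r| := by
      have h6 := hLip r q
      rwa [abs_sub_comm q r]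
    calc |g q d - g r d| ≤ |2*α*(Φ (r - J*d) - Φ (q - J*d))| + |2*(1-α)*(Φ r - Φ q)| := by
          rw [h1]; exact abs_add_le _ _
      _ = 2*α*|Φ (r - J*d) - Φ (q - J*d)| + 2*(1-α)*|Φ r - Φ q| := by
          rw [habs _ _ (by positivity : (0:ℝ) < 2*α),
            habs _ _ (by linarith : (0:ℝ) < 2*(1-α))]
      _ ≤ L * |q - r| := by
          rw [hLdef]
          nlinarith [mul_le_mul_of_nonneg_left h2 (by positivity : (0:ℝ) ≤ 2*α),
            mul_le_mul_of_nonneg_left h5 (by linarith : (0:ℝ) ≤ 2*(1-α))]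
  have hgmono : ∀ q d e, d ≤ e → g q d ≤ g q e := by
    intro q d e hde
    rw [hgdef, hgdef]
    have h1 : Φ (q - J*e) ≤ Φ (q - J*d) := hmono (by nlinarith)
    nlinarith
  have hg0 : ∀ q, g q 0 = 1 - 2*Φ q := by
    intro q; rw [hgdef]; simp only [mul_zero, sub_zero]; ring
  have hg00 : g 0 0 = 0 := by rw [hg0, hΦ0]; ring
  -- fixed point of d ↦ g q d
  have hex : ∀ q, ∃ d, g q d = d := by
    intro q
    have hK : (⟨κ, hκpos.le⟩ : NNReal) < 1 := by
      exact (NNReal.coe_lt_coe (r₁ := ⟨κ, hκpos.le⟩) (r₂ := 1)).mp (by norm_num; exact hκ1)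
    have hlip : LipschitzWith ⟨κ, hκpos.le⟩ (g q) := by
      apply LipschitzWith.of_dist_le_mul
      intro d e
      simp only [Real.dist_eq, NNReal.coe_mk]
      exact hgd q d e
    have hcon : ContractingWith ⟨κ, hκpos.le⟩ (g q) := ⟨hK, hlip⟩
    exact ⟨ContractingWith.fixedPoint (g q) hcon, hcon.fixedPoint_isFixedPt⟩
  choose dstar hdstar using hex
  have hds0 : dstar 0 = 0 := by
    have h1 : |dstar 0 - 0| ≤ κ * |dstar 0 - 0| := by
      calc |dstar 0 - 0| = |g 0 (dstar 0) - g 0 0| := by rw [hdstar 0, hg00]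
        _ ≤ κ * |dstar 0 - 0| := hgd 0 _ 0
    have h2 : |dstar 0 - 0| = 0 := by nlinarith [abs_nonneg (dstar 0 - 0)]
    simpa using abs_eq_zero.mp h2
  have hdsLip : ∀ q r, |dstar q - dstar r| ≤ M * |q - r| := by
    intro q r
    have h2 : |dstar q - dstar r| ≤ κ*|dstar q - dstar r| + L*|q - r| := by
      calc |dstar q - dstar r| = |g q (dstar q) - g r (dstar r)| := by
            rw [hdstar, hdstar]
        _ ≤ |g q (dstar q) - g q (dstar r)| + |g q (dstar r) - g r (dstar r)| :=
            abs_sub_le _ _ _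
        _ ≤ κ*|dstar q - dstar r| + L*|q - r| := add_le_add (hgd _ _ _) (hgq _ _ _)
    rw [hMdef, div_mul_eq_mul_div, le_div_iff₀ h1κ]
    nlinarith
  have hdsbound : ∀ q, |dstar q| ≤ M * |q| := by
    intro q
    have := hdsLip q 0
    simpa [hds0] using this
  have hdsneg : ∀ q, 0 < q → dstar q ≤ 1 - 2*Φ q := by
    intro q hq
    have hΦq : 1/2 < Φ q := by rw [← hΦ0]; exact hsm hq
    have hle0 : dstar q ≤ 0 := by
      by_contra h
      push_neg at h
      have h1 : g q (dstar q) - g q 0 ≤ κ * dstar q := by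
        calc g q (dstar q) - g q 0 ≤ |g q (dstar q) - g q 0| := le_abs_self _
          _ ≤ κ * |dstar q - 0| := hgd q _ 0
          _ = κ * dstar q := by rw [sub_zero, abs_of_pos h]
      rw [hdstar, hg0] at h1
      nlinarith
    calc dstar q = g q (dstar q) := (hdstar q).symm
      _ ≤ g q 0 := hgmono q _ _ hle0
      _ = 1 - 2*Φ q := hg0 q
  have hdspos : ∀ q, q < 0 → 1 - 2*Φ q ≤ dstar q := by
    intro q hq
    have hΦq : Φ q < 1/2 := by rw [← hΦ0]; exact hsm hq
    have hge0 : 0 ≤ dstar q := by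
      by_contra h
      push_neg at h
      have h1 : g q 0 - g q (dstar q) ≤ κ * (-dstar q) := by
        calc g q 0 - g q (dstar q) ≤ |g q 0 - g q (dstar q)| := le_abs_self _
          _ ≤ κ * |(0:ℝ) - dstar q| := hgd q 0 _
          _ = κ * (-dstar q) := by rw [zero_sub, abs_of_pos (by linarith : 0 < -dstar q)]
      rw [hdstar, hg0] at h1
      nlinarith
    calc (1 : ℝ) - 2*Φ q = g q 0 := (hg0 q).symm
      _ ≤ g q (dstar q) := hgmono q _ _ hge0
      _ = dstar q := hdstar q
  have hsign1 : ∀ q, 0 ≤ q → dstar q ≤ 0 := by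
    intro q hq
    rcases eq_or_lt_of_le hq with h | h
    · rw [← h, hds0]
    · have h1 := hdsneg q h
      have h2 : 1/2 < Φ q := by rw [← hΦ0]; exact hsm h
      linarith
  have hsign2 : ∀ q, q ≤ 0 → 0 ≤ dstar q := by
    intro q hq
    rcases eq_or_lt_of_le hq with h | h
    · rw [h, hds0]
    · have h1 := hdspos q h
      have h2 : Φ q < 1/2 := by rw [← hΦ0]; exact hsm h
      linarith
  -- orbit quantities
  obtain ⟨q, hqdef⟩ : ∃ q : ℕ → ℝ, ∀ n, q n = (s n).1 + lam*(s n).2 := ⟨_, fun n => rfl⟩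
  obtain ⟨d, hddef⟩ : ∃ d : ℕ → ℝ, ∀ n, d n = (s n).2 := ⟨_, fun n => rfl⟩
  have hstep : ∀ n, d (n+1) = g (q n) (d n) ∧ q (n+1) = q n + lam * d (n+1) := by
    intro n
    have h1 := hs n
    rw [hΨ] at h1
    have hfst : (s (n+1)).1 = q n := by rw [h1, hqdef]
    have hsnd : (s (n+1)).2 = g (q n) (d n) := by
      rw [h1, hgdef, hqdef, hddef]
      have harg1 : (s n).1 + (lam - J)*(s n).2
          = ((s n).1 + lam*(s n).2) - J*(s n).2 := by ring
      have harg2 : (s n).1 + lam*(s n).2 = (s n).1 + lam*(s n).2 := rfl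
      rw [harg1]
    constructor
    · rw [hddef]; exact hsnd
    · rw [hqdef (n+1), hfst, hddef]
  obtain ⟨e, hedef⟩ : ∃ e : ℕ → ℝ, ∀ n, e n = d n - dstar (q n) := ⟨_, fun n => rfl⟩
  -- per-step estimates
  have est1 : ∀ n, |d (n+1) - dstar (q n)| ≤ κ * |e n| := by
    intro n
    calc |d (n+1) - dstar (q n)| = |g (q n) (d n) - g (q n) (dstar (q n))| := by
          rw [(hstep n).1, hdstar]
      _ ≤ κ * |d n - dstar (q n)| := hgd _ _ _
      _ = κ * |e n| := by rw [hedef]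
  have est2 : ∀ n, |q (n+1)| ≤ |q n| - lam*|dstar (q n)| + lam*(κ*|e n|) := by
    intro n
    have hA : |q n + lam*dstar (q n)| = |q n| - lam*|dstar (q n)| := by
      rcases le_or_gt 0 (q n) with hq | hq
      · have h1 : dstar (q n) ≤ 0 := hsign1 _ hq
        have h2 : lam * |dstar (q n)| ≤ q n := by
          have h3 := hdsbound (q n)
          rw [abs_of_nonneg hq] at h3
          calc lam*|dstar (q n)| ≤ lam*(M*q n) := by
                exact mul_le_mul_of_nonneg_left h3 hlam.le
            _ = (lam*M)*q n := by ring
            _ ≤ 1*q n := mul_le_mul_of_nonneg_right hlamM hq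
            _ = q n := one_mul _
        have h4 : 0 ≤ q n + lam*dstar (q n) := by
          rw [abs_of_nonpos h1] at h2; linarith
        rw [abs_of_nonneg h4, abs_of_nonneg hq, abs_of_nonpos h1]; ring
      · have h1 : 0 ≤ dstar (q n) := hsign2 _ hq.le
        have h2 : lam * |dstar (q n)| ≤ -q n := by
          have h3 := hdsbound (q n)
          rw [abs_of_neg hq] at h3
          calc lam*|dstar (q n)| ≤ lam*(M*(-q n)) := by
                exact mul_le_mul_of_nonneg_left h3 hlam.le
            _ = (lam*M)*(-q n) := by ring
            _ ≤ 1*(-q n) := mul_le_mul_of_nonneg_right hlamM (by linarith)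
            _ = -q n := one_mul _
        have h4 : q n + lam*dstar (q n) ≤ 0 := by
          rw [abs_of_nonneg h1] at h2; linarith
        rw [abs_of_nonpos h4, abs_of_neg hq, abs_of_nonneg h1]; ring
    have h5 : q (n+1) = (q n + lam*dstar (q n)) + lam*(d (n+1) - dstar (q n)) := by
      rw [(hstep n).2]; ring
    calc |q (n+1)| ≤ |q n + lam*dstar (q n)| + |lam*(d (n+1) - dstar (q n))| := by
          rw [h5]; exact abs_add_le _ _
      _ = |q n + lam*dstar (q n)| + lam*|d (n+1) - dstar (q n)| := by
          rw [abs_mul, abs_of_pos hlam]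
      _ ≤ |q n| - lam*|dstar (q n)| + lam*(κ*|e n|) := by
          rw [hA]
          have := mul_le_mul_of_nonneg_left (est1 n) hlam.le
          linarith
  have est3b : ∀ n, |d (n+1)| ≤ |dstar (q n)| + κ*|e n| := by
    intro n
    calc |d (n+1)| ≤ |dstar (q n)| + |d (n+1) - dstar (q n)| := by
          have := abs_sub_le (d (n+1)) (dstar (q n)) 0
          simp only [sub_zero] at this
          calc |d (n+1)| ≤ |d (n+1) - dstar (q n)| + |dstar (q n)| := this
            _ = |dstar (q n)| + |d (n+1) - dstar (q n)| := by ring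
      _ ≤ |dstar (q n)| + κ*|e n| := by linarith [est1 n]
  have est3 : ∀ n, |e (n+1)| ≤ κ*|e n| + M*(lam*|d (n+1)|) := by
    intro n
    have h1 : |dstar (q n) - dstar (q (n+1))| ≤ M*(lam*|d (n+1)|) := by
      have h2 := hdsLip (q n) (q (n+1))
      have h3 : |q n - q (n+1)| = lam*|d (n+1)| := by
        rw [(hstep n).2, show q n - (q n + lam * d (n+1)) = -(lam * d (n+1)) by ring,
          abs_neg, abs_mul, abs_of_pos hlam]
      rwa [h3] at h2
    calc |e (n+1)| = |d (n+1) - dstar (q (n+1))| := by rw [hedef]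
      _ ≤ |d (n+1) - dstar (q n)| + |dstar (q n) - dstar (q (n+1))| := abs_sub_le _ _ _
      _ ≤ κ*|e n| + M*(lam*|d (n+1)|) := add_le_add (est1 n) h1
  -- Lyapunov function
  obtain ⟨V, hVdef⟩ : ∃ V : ℕ → ℝ, ∀ n, V n = |q n| + cc*|e n| := ⟨_, fun n => rfl⟩
  obtain ⟨a, hadef⟩ : ∃ a : ℕ → ℝ, ∀ n,
      a n = (lam/2)*|dstar (q n)| + (cc*(1-κ)/2)*|e n| := ⟨_, fun n => rfl⟩
  have hanonneg : ∀ n, 0 ≤ a n := by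
    intro n
    rw [hadef]
    have h2 : (0:ℝ) ≤ cc*(1-κ)/2 := by
      have := mul_pos hccpos h1κ; linarith
    exact add_nonneg (mul_nonneg (by linarith) (abs_nonneg _))
      (mul_nonneg h2 (abs_nonneg _))
  have hVnonneg : ∀ n, 0 ≤ V n := by
    intro n
    rw [hVdef]
    exact add_nonneg (abs_nonneg _) (mul_nonneg hccpos.le (abs_nonneg _))
  have hlamκcc : (3/2)*(lam*κ) ≤ cc*(1-κ)/2 := by
    have hccalt : cc*(1-κ)/2 = (1-κ)^2/(4*L) := by
      rw [hccdef]; field_simp; ring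
    rw [hccalt, le_div_iff₀ (by positivity : (0:ℝ) < 4*L)]
    nlinarith
  have hkey : ∀ n, V (n+1) + a n ≤ V n := by
    intro n
    have h1 := est2 n
    have h2 := est3 n
    have h3 := est3b n
    have hE : 0 ≤ |e n| := abs_nonneg _
    have hD : 0 ≤ |dstar (q n)| := abs_nonneg _
    -- cc * |e (n+1)| ≤ cc*κ*|e n| + (lam/2)*(|dstar (q n)| + κ*|e n|)
    have h4 : |e (n+1)| ≤ κ*|e n| + M*(lam*(|dstar (q n)| + κ*|e n|)) := by
      have h5 : M*(lam*|d (n+1)|) ≤ M*(lam*(|dstar (q n)| + κ*|e n|)) := by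
        apply mul_le_mul_of_nonneg_left _ hMpos.le
        exact mul_le_mul_of_nonneg_left h3 hlam.le
      linarith
    have h6 : cc*|e (n+1)| ≤ cc*(κ*|e n|) + (lam/2)*(|dstar (q n)| + κ*|e n|) := by
      have h7 : cc*|e (n+1)| ≤ cc*(κ*|e n| + M*(lam*(|dstar (q n)| + κ*|e n|))) :=
        mul_le_mul_of_nonneg_left h4 hccpos.le
      have h8 : cc*(M*(lam*(|dstar (q n)| + κ*|e n|)))
          = (lam/2)*(|dstar (q n)| + κ*|e n|) := by
        rw [show cc*(M*(lam*(|dstar (q n)| + κ*|e n|)))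
          = (cc*M)*(lam*(|dstar (q n)| + κ*|e n|)) by ring, hcM]
        ring
      linarith
    rw [hVdef, hVdef, hadef]
    -- coefficient comparison
    have h9 : (cc*κ + (3/2)*(lam*κ))*|e n| ≤ (cc - cc*(1-κ)/2)*|e n| := by
      apply mul_le_mul_of_nonneg_right _ hE
      have : cc*κ + cc*(1-κ)/2 = cc - cc*(1-κ)/2 := by ring
      linarith [hlamκcc]
    linarith
  -- summability
  have hsum : ∀ n, V n + ∑ k ∈ Finset.range n, a k ≤ V 0 := by
    intro n
    induction n with
    | zero => simp
    | succ n ih =>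
      rw [Finset.sum_range_succ]
      have := hkey n
      linarith
  have hsummable : Summable a := by
    apply summable_of_sum_range_le hanonneg
    intro n
    have := hsum n
    have := hVnonneg n
    linarith
  have hatends : Filter.Tendsto a Filter.atTop (nhds 0) := hsummable.tendsto_atTop_zero
  -- |dstar (q n)| → 0
  have hDtend : Filter.Tendsto (fun n => |dstar (q n)|) Filter.atTop (nhds 0) := by
    have hub : ∀ n, |dstar (q n)| ≤ (2/lam) * a n := by
      intro n
      have h1 : (cc*(1-κ)/2)*|e n| ≥ 0 := by positivity
      have h2 : (lam/2)*|dstar (q n)| ≤ a n := by rw [hadef]; linarith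
      calc |dstar (q n)| = (2/lam)*((lam/2)*|dstar (q n)|) := by
            field_simp
        _ ≤ (2/lam)*a n := by
            exact mul_le_mul_of_nonneg_left h2 (by positivity)
    have hg0' : Filter.Tendsto (fun n => (2/lam) * a n) Filter.atTop (nhds 0) := by
      have := hatends.const_mul (2/lam)
      simpa using this
    exact squeeze_zero (fun n => abs_nonneg _) hub hg0'
  -- |e n| → 0
  have hEtend : Filter.Tendsto (fun n => |e n|) Filter.atTop (nhds 0) := by
    have hub : ∀ n, |e n| ≤ (2/(cc*(1-κ))) * a n := by
      intro n
      have h1 : (lam/2)*|dstar (q n)| ≥ 0 := by positivity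
      have h2 : (cc*(1-κ)/2)*|e n| ≤ a n := by rw [hadef]; linarith
      calc |e n| = (2/(cc*(1-κ)))*((cc*(1-κ)/2)*|e n|) := by
            field_simp
        _ ≤ (2/(cc*(1-κ)))*a n := by
            exact mul_le_mul_of_nonneg_left h2 (by positivity)
    have hg0' : Filter.Tendsto (fun n => (2/(cc*(1-κ))) * a n) Filter.atTop (nhds 0) := by
      have := hatends.const_mul (2/(cc*(1-κ)))
      simpa using this
    exact squeeze_zero (fun n => abs_nonneg _) hub hg0'
  -- q n → 0
  have hqtend : Filter.Tendsto q Filter.atTop (nhds 0) := by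
    rw [Metric.tendsto_atTop]
    intro ε hε
    have hΦε : 1/2 < Φ ε := by rw [← hΦ0]; exact hsm hε
    have hΦnε : Φ (-ε) < 1/2 := by rw [← hΦ0]; exact hsm (by linarith)
    set δ : ℝ := min (2*Φ ε - 1) (1 - 2*Φ (-ε)) with hδdef
    have hδpos : 0 < δ := lt_min (by linarith) (by linarith)
    obtain ⟨N, hN⟩ := (Metric.tendsto_atTop.mp hDtend) δ hδpos
    refine ⟨N, fun n hn => ?_⟩
    have h1 := hN n hn
    rw [Real.dist_eq, sub_zero, abs_abs] at h1
    rw [Real.dist_eq, sub_zero]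
    by_contra h
    push_neg at h
    rcases le_abs.mp h with h2 | h2
    · -- ε ≤ q n
      have h3 : dstar (q n) ≤ 1 - 2*Φ (q n) := hdsneg _ (by linarith)
      have h4 : Φ ε ≤ Φ (q n) := hmono h2
      have h5 : dstar (q n) ≤ -(2*Φ ε - 1) := by linarith
      have h6 : δ ≤ 2*Φ ε - 1 := min_le_left _ _
      have h7 : 2*Φ ε - 1 ≤ |dstar (q n)| := by
        rw [abs_of_nonpos (by linarith : dstar (q n) ≤ 0)]; linarith
      linarith
    · -- ε ≤ -q n
      have h3 : 1 - 2*Φ (q n) ≤ dstar (q n) := hdspos _ (by linarith)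
      have h4 : Φ (q n) ≤ Φ (-ε) := hmono (by linarith)
      have h5 : 1 - 2*Φ (-ε) ≤ dstar (q n) := by linarith
      have h6 : δ ≤ 1 - 2*Φ (-ε) := min_le_right _ _
      have h7 : 1 - 2*Φ (-ε) ≤ |dstar (q n)| := by
        rw [abs_of_nonneg (by linarith : 0 ≤ dstar (q n))]; linarith
      linarith
  -- d n → 0 and p n → 0
  have hdstend : Filter.Tendsto (fun n => dstar (q n)) Filter.atTop (nhds 0) := by
    rw [tendsto_zero_iff_abs_tendsto_zero]
    exact hDtend
  have hetend : Filter.Tendsto e Filter.atTop (nhds 0) := by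
    rw [tendsto_zero_iff_abs_tendsto_zero]
    exact hEtend
  have hdtend : Filter.Tendsto d Filter.atTop (nhds 0) := by
    have h1 : d = fun n => e n + dstar (q n) := by
      funext n; rw [hedef]; ring
    rw [h1]
    simpa using hetend.add hdstend
  have hptend : Filter.Tendsto (fun n => (s n).1) Filter.atTop (nhds 0) := by
    have h1 : (fun n => (s n).1) = fun n => q n - lam * d n := by
      funext n; rw [hqdef, hddef]; ring
    rw [h1]
    simpa using hqtend.sub (hdtend.const_mul lam)
  have hstend : Filter.Tendsto (fun n => (s n).2) Filter.atTop (nhds 0) := by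
    have h1 : (fun n => (s n).2) = d := by funext n; rw [hddef]
    rw [h1]; exact hdtend
  have h2 : s = fun n => ((s n).1, (s n).2) := by funext n; rfl
  rw [h2]
  exact hptend.prodMk_nhds hstend
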